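/- FoNE decoding correctness: let x be a natural number with x < 10^m and let d_i denote its i-th least significant digit. Suppose the hidden state h ∈ ℝ^(2m) satisfies (h[2i-1], h[2i]) = φ(d_i, 10) for each i = 1,...,m (1-indexed pairs). Then the Fourier Number Final Prediction ŷ = ∑_{i=1}^m (argmax_{j∈{0,...,9}} ⟨(h[2i-1], h[2i]), φ(j,10)⟩)·10^(i-1) equals x. -/
import Mathlib

noncomputable def phi (x T : ℝ) : ℝ × ℝ :=
  (Real.cos (2 * Real.pi / T * x), Real.sin (2 * Real.pi / T * x))

def dot (p q : ℝ × ℝ) : ℝ := p.1 * q.1 + p.2 * q.2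

lemma dot_phi (a b : ℝ) : dot (phi a 10) (phi b 10) = Real.cos (2 * Real.pi / 10 * (a - b)) := by
  simp [dot, phi, mul_sub, Real.cos_sub]

lemma digit_eq (d j : ℕ) (hd : d ≤ 9) (hj : j ≤ 9)
    (hle : dot (phi (d : ℝ) 10) (phi (d : ℝ) 10) ≤ dot (phi (d : ℝ) 10) (phi (j : ℝ) 10)) :
    j = d := by
  rw [dot_phi, dot_phi, sub_self, mul_zero, Real.cos_zero] at hle
  have hle' : Real.cos (2 * Real.pi / 10 * ((d : ℝ) - j)) = 1 :=
    le_antisymm (Real.cos_le_one _) hle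
  obtain ⟨n, hn⟩ := (Real.cos_eq_one_iff _).mp hle'
  have hpi := Real.pi_pos
  have h1 : (n : ℝ) * 10 = (d : ℝ) - j := by
    have h2 : (2 * Real.pi) * ((n:ℝ) * 10) = (2 * Real.pi) * ((d:ℝ) - j) := by
      linear_combination 10 * hn
    exact mul_left_cancel₀ (by positivity) h2
  have habs : |(d : ℝ) - j| ≤ 9 := by
    rw [abs_sub_le_iff]
    constructor <;> [skip; skip] <;>
      · have := (Nat.cast_le (α := ℝ)).mpr hd
        have := (Nat.cast_le (α := ℝ)).mpr hj
        have hd0 : (0:ℝ) ≤ d := Nat.cast_nonneg d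
        have hj0 : (0:ℝ) ≤ j := Nat.cast_nonneg j
        push_cast at *
        linarith
  have hn0 : n = 0 := by
    by_contra hne
    have : (1:ℝ) ≤ |(n:ℝ)| := by
      have : 1 ≤ |n| := Int.one_le_abs hne
      exact_mod_cast this
    have : (10:ℝ) ≤ |(n:ℝ) * 10| := by
      rw [abs_mul]; simp; linarith
    rw [h1] at this; linarith
  rw [hn0] at h1
  simp at h1
  exact_mod_cast (sub_eq_zero.mp h1.symm).symm

theorem fone_decoding_correct (m : ℕ) (hm : 1 ≤ m) (x : ℕ) (hx : x < 10 ^ m)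
    (h : ℕ → ℝ)
    (hh : ∀ i : ℕ, 1 ≤ i → i ≤ m →
      (h (2 * i - 1), h (2 * i)) = phi ((x / 10 ^ (i - 1) % 10 : ℕ) : ℝ) 10)
    (g : ℕ → ℕ)
    (hg : ∀ i : ℕ, 1 ≤ i → i ≤ m → g i ≤ 9 ∧
      ∀ j : ℕ, j ≤ 9 →
        dot (h (2 * i - 1), h (2 * i)) (phi (j : ℝ) 10) ≤
        dot (h (2 * i - 1), h (2 * i)) (phi ((g i : ℕ) : ℝ) 10)) :
    ∑ i ∈ Finset.range m, g (i + 1) * 10 ^ i = x := by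
  have hgd : ∀ i : ℕ, 1 ≤ i → i ≤ m → g i = x / 10 ^ (i - 1) % 10 := by
    intro i h1 h2
    obtain ⟨hg9, hmax⟩ := hg i h1 h2
    have heq := hh i h1 h2
    set d := x / 10 ^ (i - 1) % 10 with hd
    have hd9 : d ≤ 9 := Nat.lt_succ_iff.mp (Nat.mod_lt _ (by norm_num))
    have := hmax d hd9
    rw [heq] at this
    exact digit_eq d (g i) hd9 hg9 this
  have key : ∀ i ∈ Finset.range m, g (i + 1) * 10 ^ i = (x / 10 ^ i % 10) * 10 ^ i := by
    intro i hi
    rw [hgd (i+1) (Nat.le_add_left 1 i) (Finset.mem_range.mp hi)]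
    simp
  rw [Finset.sum_congr rfl key]
  -- now prove ∑ i in range m, x / 10^i % 10 * 10^i = x
  have main : ∀ n : ℕ, ∑ i ∈ Finset.range n, (x / 10 ^ i % 10) * 10 ^ i = x % 10 ^ n := by
    intro n
    induction n with
    | zero => simp [Nat.mod_one]
    | succ k ih =>
      rw [Finset.sum_range_succ, ih, Nat.mod_pow_succ]
      ring
  rw [main m, Nat.mod_eq_of_lt hx]
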